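/- Let m ≥ 1 be an integer, let g : ℝ → ℝ be m times continuously differentiable on [0, l], and fix x ∈ (0, l]. Then, as τ → +∞, ∫₀ˣ e^{2τt} g(t) dt = Σ_{k=0}^{m−1} (−1)^{k} g^{(k)}(x) e^{2τx}/(2τ)^{k+1} + r(τ), where τ^{m} e^{−2τx} r(τ) → 0 as τ → +∞ (i.e. the remainder is o(e^{2τx}/τ^{m})). -/

import Mathlib

open Real MeasureTheory Filter Finset intervalIntegral

lemma ibp_identity (l x τ : ℝ) (hl : 0 < l) (hτ : 0 < τ)
    (m : ℕ) (g : ℝ → ℝ) (hg : ContDiffOn ℝ m g (Set.Icc 0 l))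
    (hx : x ∈ Set.Ioc 0 l) :
    ∀ n ≤ m,
      (∫ t in (0:ℝ)..x, Real.exp (2 * τ * t) * g t) =
        (∑ k ∈ Finset.range n, (-1:ℝ)^k *
            (iteratedDerivWithin k g (Set.Icc 0 l) x * Real.exp (2 * τ * x)
              - iteratedDerivWithin k g (Set.Icc 0 l) 0) / (2*τ)^(k+1))
        + (-1:ℝ)^n / (2*τ)^n *
            ∫ t in (0:ℝ)..x, Real.exp (2 * τ * t) * iteratedDerivWithin n g (Set.Icc 0 l) t := by
  have hs : UniqueDiffOn ℝ (Set.Icc (0:ℝ) l) := uniqueDiffOn_Icc hl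
  have hx0 : (0:ℝ) < x := hx.1
  have huIcc : Set.uIcc (0:ℝ) x = Set.Icc 0 x := Set.uIcc_of_le hx0.le
  have hsub : Set.Icc (0:ℝ) x ⊆ Set.Icc 0 l := Set.Icc_subset_Icc le_rfl hx.2
  have h2τ : (2*τ) ≠ 0 := by positivity
  intro n hn
  induction n with
  | zero => simp [iteratedDerivWithin_zero]
  | succ n ih =>
    have hn' : n ≤ m := le_of_lt (Nat.lt_of_succ_le hn)
    have IH := ih hn'
    set f : ℕ → ℝ → ℝ := fun k => iteratedDerivWithin k g (Set.Icc 0 l) with hf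
    -- integration by parts on ∫ exp(2τt) f n t
    have hdiff : DifferentiableOn ℝ (f n) (Set.Icc 0 l) :=
      hg.differentiableOn_iteratedDerivWithin (by exact_mod_cast Nat.lt_of_succ_le hn) hs
    have hu : ∀ t ∈ Set.uIcc (0:ℝ) x, HasDerivWithinAt (f n) (f (n+1) t) (Set.uIcc (0:ℝ) x) t := by
      intro t ht
      rw [huIcc] at ht ⊢
      have h1 : HasDerivWithinAt (f n) (derivWithin (f n) (Set.Icc 0 l) t) (Set.Icc 0 l) t :=
        (hdiff t (hsub ht)).hasDerivWithinAt
      have h2 : f (n+1) t = derivWithin (f n) (Set.Icc 0 l) t :=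
        congrFun iteratedDerivWithin_succ t
      rw [h2]
      exact h1.mono hsub
    have hv : ∀ t ∈ Set.uIcc (0:ℝ) x,
        HasDerivWithinAt (fun t => Real.exp (2*τ*t) / (2*τ)) (Real.exp (2*τ*t)) (Set.uIcc (0:ℝ) x) t := by
      intro t ht
      have h1 : HasDerivAt (fun t : ℝ => 2*τ*t) (2*τ) t := by
        simpa using (hasDerivAt_id t).const_mul (2*τ)
      have h2 := (h1.exp).div_const (2*τ)
      have : Real.exp (2*τ*t) * (2*τ) / (2*τ) = Real.exp (2*τ*t) := by
        field_simp
      rw [this] at h2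
      exact h2.hasDerivWithinAt
    have hu' : IntervalIntegrable (f (n+1)) volume 0 x := by
      apply ContinuousOn.intervalIntegrable
      rw [huIcc]
      exact (hg.continuousOn_iteratedDerivWithin (by exact_mod_cast hn) hs).mono hsub
    have hv' : IntervalIntegrable (fun t => Real.exp (2*τ*t)) volume 0 x :=
      (Real.continuous_exp.comp (continuous_const.mul continuous_id)).intervalIntegrable 0 x
    have ibp := intervalIntegral.integral_mul_deriv_eq_deriv_mul_of_hasDerivWithinAt hu hv hu' hv'
    have key : (∫ t in (0:ℝ)..x, Real.exp (2*τ*t) * f n t) =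
        (f n x * Real.exp (2*τ*x) - f n 0) / (2*τ)
          - (1/(2*τ)) * ∫ t in (0:ℝ)..x, Real.exp (2*τ*t) * f (n+1) t := by
      have e1 : (∫ t in (0:ℝ)..x, Real.exp (2*τ*t) * f n t)
          = ∫ t in (0:ℝ)..x, f n t * Real.exp (2*τ*t) := by
        simp_rw [mul_comm]
      have e2 : (∫ t in (0:ℝ)..x, f (n+1) t * (Real.exp (2*τ*t) / (2*τ)))
          = (∫ t in (0:ℝ)..x, Real.exp (2*τ*t) * f (n+1) t) / (2*τ) := by
        rw [← intervalIntegral.integral_div]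
        congr 1; funext t; ring
      rw [e1, ibp, e2]
      rw [mul_zero, Real.exp_zero]
      field_simp
    rw [IH, key, Finset.sum_range_succ]
    have hp : ((2*τ):ℝ)^n ≠ 0 := pow_ne_zero _ h2τ
    field_simp
    simp only [hf]
    ring_nf
    ac_rfl

lemma pow_mul_exp_neg_tendsto (c : ℝ) (hc : 0 < c) (j : ℕ) :
    Tendsto (fun τ : ℝ => τ ^ j * Real.exp (-(c * τ))) atTop (nhds 0) := by
  have h0 : Tendsto (fun τ : ℝ => c * τ) atTop atTop :=
    Tendsto.const_mul_atTop hc tendsto_id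
  have h1 := (tendsto_pow_mul_exp_neg_atTop_nhds_zero j).comp h0
  have h2 := h1.const_mul ((c ^ j)⁻¹)
  rw [mul_zero] at h2
  refine h2.congr fun τ => ?_
  simp only [Function.comp_apply, mul_pow]
  have : (c:ℝ)^j ≠ 0 := pow_ne_zero _ hc.ne'
  field_simp

/-- Watson-type lemma obtained by repeated integration by parts:
for `g ∈ C^m([0, l])` and fixed `x ∈ (0, l]`,
`∫₀ˣ e^{2τt} g(t) dt = Σ_{k=0}^{m-1} (-1)^k g^{(k)}(x) e^{2τx}/(2τ)^{k+1} + o(e^{2τx}/τ^m)`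
as `τ → +∞`. -/
theorem laplace_integration_by_parts (l : ℝ) (hl : 0 < l) (m : ℕ) (hm : 1 ≤ m)
    (g : ℝ → ℝ) (hg : ContDiffOn ℝ m g (Set.Icc 0 l))
    (x : ℝ) (hx : x ∈ Set.Ioc 0 l) :
    Tendsto (fun τ : ℝ => τ ^ m * Real.exp (-2 * τ * x) *
      ((∫ t in (0:ℝ)..x, Real.exp (2 * τ * t) * g t) -
        ∑ k ∈ Finset.range m,
          (-1 : ℝ) ^ k * iteratedDerivWithin k g (Set.Icc 0 l) x *
            Real.exp (2 * τ * x) / (2 * τ) ^ (k + 1)))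
      atTop (nhds 0) := by
  have hs : UniqueDiffOn ℝ (Set.Icc (0:ℝ) l) := uniqueDiffOn_Icc hl
  have hx0 : (0:ℝ) < x := hx.1
  have huIcc : Set.uIcc (0:ℝ) x = Set.Icc 0 x := Set.uIcc_of_le hx0.le
  have hsub : Set.Icc (0:ℝ) x ⊆ Set.Icc 0 l := Set.Icc_subset_Icc le_rfl hx.2
  set f : ℕ → ℝ → ℝ := fun k => iteratedDerivWithin k g (Set.Icc 0 l) with hf
  -- bound on f m over [0, x]
  have hcont : ContinuousOn (f m) (Set.Icc 0 x) :=
    (hg.continuousOn_iteratedDerivWithin le_rfl hs).mono hsub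
  obtain ⟨C, hC⟩ := (isCompact_Icc).exists_bound_of_continuousOn hcont
  have hC0 : 0 ≤ C := le_trans (norm_nonneg _) (hC x (Set.right_mem_Icc.2 hx0.le))
  set J : ℝ → ℝ := fun τ => ∫ t in (0:ℝ)..x, Real.exp (2 * τ * t) * f m t with hJ
  set G : ℝ → ℝ := fun τ =>
    (∑ k ∈ Finset.range m,
      (-1:ℝ)^(k+1) * f k 0 / 2^(k+1) * (τ^(m-(k+1)) * Real.exp (-2 * τ * x)))
    + ((-1:ℝ)^m / 2^m) * (Real.exp (-2 * τ * x) * J τ) with hG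
  have hGlim : Tendsto G atTop (nhds 0) := by
    have hsum : Tendsto (fun τ => ∑ k ∈ Finset.range m,
        (-1:ℝ)^(k+1) * f k 0 / 2^(k+1) * (τ^(m-(k+1)) * Real.exp (-2 * τ * x)))
        atTop (nhds 0) := by
      have : Tendsto (fun τ => ∑ k ∈ Finset.range m,
          (-1:ℝ)^(k+1) * f k 0 / 2^(k+1) * (τ^(m-(k+1)) * Real.exp (-2 * τ * x)))
          atTop (nhds (∑ k ∈ Finset.range m, (0:ℝ))) := by
        apply tendsto_finset_sum
        intro k _
        have h1 := (pow_mul_exp_neg_tendsto (2*x) (by positivity) (m-(k+1))).const_mul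
          ((-1:ℝ)^(k+1) * f k 0 / 2^(k+1))
        rw [mul_zero] at h1
        refine h1.congr fun τ => ?_
        have : -(2*x*τ) = -2*τ*x := by ring
        rw [this]
      simpa using this
    have hsecond : Tendsto (fun τ => ((-1:ℝ)^m / 2^m) * (Real.exp (-2 * τ * x) * J τ))
        atTop (nhds 0) := by
      apply squeeze_zero_norm' (a := fun τ => C * τ⁻¹)
      · filter_upwards [eventually_ge_atTop (1:ℝ)] with τ hτ1
        have hτ : (0:ℝ) < τ := lt_of_lt_of_le one_pos hτ1
        have h2τ : (0:ℝ) < 2*τ := by positivity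
        -- integral of the exponential
        have hin : (∫ t in (0:ℝ)..x, Real.exp (2 * τ * t))
            = (2*τ)⁻¹ * (Real.exp (2*τ*x) - 1) := by
          have := intervalIntegral.integral_comp_mul_left (fun t => Real.exp t) (c := 2*τ)
            (a := (0:ℝ)) (b := x)
          simp only [mul_zero, smul_eq_mul] at this
          rw [this (by positivity), integral_exp]
          simp
        have hint1 : IntervalIntegrable (fun t => |Real.exp (2 * τ * t) * f m t|) volume 0 x := by
          apply ContinuousOn.intervalIntegrable
          rw [huIcc]
          exact ((Real.continuous_exp.comp (continuous_const.mul continuous_id)).continuousOn.mul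
            hcont).abs
        have hint2 : IntervalIntegrable (fun t => Real.exp (2 * τ * t) * C) volume 0 x :=
          ((Real.continuous_exp.comp (continuous_const.mul continuous_id)).mul
            continuous_const).intervalIntegrable 0 x
        have habs : |J τ| ≤ ∫ t in (0:ℝ)..x, Real.exp (2 * τ * t) * C := by
          calc |J τ| ≤ ∫ t in (0:ℝ)..x, |Real.exp (2 * τ * t) * f m t| :=
                intervalIntegral.abs_integral_le_integral_abs hx0.le
            _ ≤ ∫ t in (0:ℝ)..x, Real.exp (2 * τ * t) * C := by
                apply intervalIntegral.integral_mono_on hx0.le hint1 hint2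
                intro t ht
                rw [abs_mul, abs_of_pos (Real.exp_pos _)]
                exact mul_le_mul_of_nonneg_left
                  (by simpa using hC t ht) (Real.exp_pos _).le
        have hJle : |J τ| ≤ C * ((2*τ)⁻¹ * Real.exp (2*τ*x)) := by
          refine habs.trans ?_
          rw [show (∫ t in (0:ℝ)..x, Real.exp (2 * τ * t) * C)
              = (∫ t in (0:ℝ)..x, Real.exp (2 * τ * t)) * C from
            intervalIntegral.integral_mul_const C _, hin]
          have : (2*τ)⁻¹ * (Real.exp (2*τ*x) - 1) ≤ (2*τ)⁻¹ * Real.exp (2*τ*x) := by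
            apply mul_le_mul_of_nonneg_left _ (inv_nonneg.2 h2τ.le)
            linarith
          nlinarith
        have hnorm : ‖((-1:ℝ)^m / 2^m) * (Real.exp (-2 * τ * x) * J τ)‖
            ≤ C * τ⁻¹ := by
          rw [Real.norm_eq_abs, abs_mul, abs_mul, abs_div, abs_pow, abs_pow,
            abs_neg, abs_one, one_pow, abs_two, abs_of_pos (Real.exp_pos _)]
          have h1 : (1:ℝ) / 2^m ≤ 1 := by
            rw [div_le_one (by positivity)]
            exact one_le_pow₀ one_le_two
          have h2 : Real.exp (-2 * τ * x) * |J τ|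
              ≤ Real.exp (-2 * τ * x) * (C * ((2*τ)⁻¹ * Real.exp (2*τ*x))) :=
            mul_le_mul_of_nonneg_left hJle (Real.exp_pos _).le
          have hee : Real.exp (-2*τ*x) * Real.exp (2*τ*x) = 1 := by
            rw [← Real.exp_add, show -2*τ*x + 2*τ*x = 0 by ring, Real.exp_zero]
          have h3 : Real.exp (-2 * τ * x) * (C * ((2*τ)⁻¹ * Real.exp (2*τ*x)))
              = C * (2*τ)⁻¹ := by
            rw [show Real.exp (-2*τ*x) * (C*((2*τ)⁻¹*Real.exp (2*τ*x)))
              = (Real.exp (-2*τ*x) * Real.exp (2*τ*x)) * (C*(2*τ)⁻¹) from by ring, hee, one_mul]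
          have h4 : Real.exp (-2 * τ * x) * |J τ| ≤ C * (2*τ)⁻¹ := h3 ▸ h2
          have h5 : C * (2*τ)⁻¹ ≤ C * τ⁻¹ := by
            apply mul_le_mul_of_nonneg_left _ hC0
            apply inv_anti₀ hτ
            linarith
          calc (1:ℝ)/2^m * (Real.exp (-2 * τ * x) * |J τ|)
              ≤ 1 * (Real.exp (-2 * τ * x) * |J τ|) :=
                mul_le_mul_of_nonneg_right h1 (by positivity)
            _ = Real.exp (-2 * τ * x) * |J τ| := one_mul _
            _ ≤ C * (2*τ)⁻¹ := h4
            _ ≤ C * τ⁻¹ := h5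
        exact hnorm
      · have := tendsto_inv_atTop_zero (𝕜 := ℝ) |>.const_mul C
        rw [mul_zero] at this
        exact this
    have := hsum.add hsecond
    rw [add_zero] at this
    exact this
  refine hGlim.congr' ?_
  filter_upwards [eventually_ge_atTop (1:ℝ)] with τ hτ1
  have hτ : (0:ℝ) < τ := lt_of_lt_of_le one_pos hτ1
  have h2τ : ((2:ℝ)*τ) ≠ 0 := by positivity
  simp only [hG, hJ, hf]
  rw [ibp_identity l x τ hl hτ m g hg hx m le_rfl]
  rw [add_sub_right_comm, ← Finset.sum_sub_distrib, mul_add, Finset.mul_sum]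
  congr 1
  · apply Finset.sum_congr rfl
    intro k hk
    have hk1 : k + 1 ≤ m := Finset.mem_range.1 hk
    have hpow : τ^(m-(k+1)) * τ^(k+1) = τ^m := by
      rw [← pow_add, Nat.sub_add_cancel hk1]
    have h2 : ((2:ℝ))^(k+1) ≠ 0 := by positivity
    have hτp : τ^(k+1) ≠ 0 := by positivity
    rw [show τ^m = τ^(m-(k+1)) * τ^(k+1) from hpow.symm]
    simp only [mul_pow]
    field_simp
    ring
  · rw [mul_pow]
    have hτm : τ^m ≠ 0 := by positivity
    field_simp
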